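/- Uniqueness for the Lane–Emden equation: let N ≥ 1, let 1 ≤ q < 2 and let Ω ⊆ ℝ^N be a bounded open set. If u₁ and u₂ are both extended classical Lane–Emden solutions on Ω, then u₁ = u₂. -/

import Mathlib

open MeasureTheory Filter Topology

/-- The Laplacian of a function on `ℝ^N`, computed as the sum of the second
partial derivatives along the coordinate directions. -/
noncomputable def lap {N : ℕ} (f : EuclideanSpace ℝ (Fin N) → ℝ)
    (x : EuclideanSpace ℝ (Fin N)) : ℝ :=
  ∑ i : Fin N, fderiv ℝ (fun y => fderiv ℝ f y (EuclideanSpace.single i 1)) x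
    (EuclideanSpace.single i 1)

/-- An extended classical Lane–Emden solution on `Ω ⊆ ℝ^N`: a Lipschitz function
`w : ℝ^N → ℝ` vanishing identically outside `Ω`, positive and twice continuously
differentiable on `Ω`, satisfying `-Δw = w^(q-1)` on `Ω`. -/
def IsExtLaneEmdenSolution {N : ℕ} (q : ℝ) (Ω : Set (EuclideanSpace ℝ (Fin N)))
    (w : EuclideanSpace ℝ (Fin N) → ℝ) : Prop :=
  (∃ K : NNReal, LipschitzWith K w) ∧ (∀ x ∉ Ω, w x = 0) ∧
    (∀ x ∈ Ω, 0 < w x) ∧ ContDiffOn ℝ 2 w Ω ∧ ∀ x ∈ Ω, -lap w x = w x ^ (q - 1)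

section Aux

/-- 1-D second derivative test (necessary condition) at a local max. -/
lemma second_deriv_nonpos_at_localmax {f f' : ℝ → ℝ} {A : ℝ}
    (hf : ∀ᶠ t in 𝓝 (0:ℝ), HasDerivAt f (f' t) t)
    (hf' : HasDerivAt f' A 0) (hmax : IsLocalMax f 0) : A ≤ 0 := by
  by_contra hA
  push_neg at hA
  have hf0 : HasDerivAt f (f' 0) 0 := hf.self_of_nhds
  have hd0 : f' 0 = 0 := by
    have := hmax.deriv_eq_zero
    rwa [hf0.deriv] at this
  have hslope : Tendsto (slope f' 0) (𝓝[≠] (0:ℝ)) (𝓝 A) :=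
    hasDerivAt_iff_tendsto_slope.mp hf'
  have hev : ∀ᶠ t in 𝓝[≠] (0:ℝ), 0 < slope f' 0 t :=
    hslope.eventually (eventually_gt_nhds hA)
  obtain ⟨δ₁, hδ₁, h1⟩ : ∃ δ > 0, ∀ t, |t| < δ → t ≠ 0 → 0 < slope f' 0 t := by
    rcases Metric.mem_nhdsWithin_iff.mp hev with ⟨δ, hδ, h⟩
    exact ⟨δ, hδ, fun t ht ht0 =>
      h ⟨by simpa [Real.dist_eq] using ht, ht0⟩⟩
  obtain ⟨δ₂, hδ₂, h2⟩ : ∃ δ > 0, ∀ t, |t| < δ → HasDerivAt f (f' t) t := by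
    rcases Metric.eventually_nhds_iff.mp hf with ⟨δ, hδ, h⟩
    exact ⟨δ, hδ, fun t ht => h (by simpa [Real.dist_eq] using ht)⟩
  obtain ⟨δ₃, hδ₃, h3⟩ : ∃ δ > 0, ∀ t, |t| < δ → f t ≤ f 0 := by
    rcases Metric.eventually_nhds_iff.mp hmax with ⟨δ, hδ, h⟩
    exact ⟨δ, hδ, fun t ht => h (by simpa [Real.dist_eq] using ht)⟩
  set δ : ℝ := min δ₁ (min δ₂ δ₃) with hδdef
  have hδ : 0 < δ := lt_min hδ₁ (lt_min hδ₂ hδ₃)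
  have hδle1 : δ ≤ δ₁ := min_le_left _ _
  have hδle2 : δ ≤ δ₂ := le_trans (min_le_right _ _) (min_le_left _ _)
  have hδle3 : δ ≤ δ₃ := le_trans (min_le_right _ _) (min_le_right _ _)
  have hmono : StrictMonoOn f (Set.Icc 0 (δ/2)) := by
    apply strictMonoOn_of_deriv_pos (convex_Icc _ _)
    · intro t ht
      have : |t| < δ₂ := by
        rw [abs_of_nonneg ht.1]; linarith [ht.2]
      exact (h2 t this).continuousAt.continuousWithinAt
    · intro t ht
      rw [interior_Icc] at ht
      have habs : |t| < δ := by
        rw [abs_of_nonneg ht.1.le]; linarith [ht.2]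
      rw [(h2 t (lt_of_lt_of_le habs hδle2)).deriv]
      have hpos := h1 t (lt_of_lt_of_le habs hδle1) (ne_of_gt ht.1)
      rw [slope_def_field, hd0] at hpos
      have h4 : 0 < f' t / t := by simpa using hpos
      have := mul_pos h4 ht.1
      rwa [div_mul_cancel₀] at this
      exact ne_of_gt ht.1
  have hlt : f 0 < f (δ/2) := by
    apply hmono (Set.mem_Icc.mpr ⟨le_refl 0, by positivity⟩)
      (Set.mem_Icc.mpr ⟨by positivity, le_refl _⟩) (by positivity)
  have hle : f (δ/2) ≤ f 0 := by
    apply h3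
    rw [abs_of_pos (by positivity)]
    linarith
  linarith

variable {N : ℕ}

/-- Directional second-derivative test at an interior local max of a C² function. -/
lemma dir_second_deriv_nonpos {h : EuclideanSpace ℝ (Fin N) → ℝ} {x : EuclideanSpace ℝ (Fin N)}
    (e : EuclideanSpace ℝ (Fin N)) {O : Set (EuclideanSpace ℝ (Fin N))}
    (hO : IsOpen O) (hx : x ∈ O) (hC : ContDiffOn ℝ 2 h O) (hmax : IsLocalMax h x) :
    fderiv ℝ (fun y => fderiv ℝ h y e) x e ≤ 0 := by
  set L : ℝ → EuclideanSpace ℝ (Fin N) := fun t => x + t • e with hL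
  have hLd : ∀ t : ℝ, HasDerivAt L e t := by
    intro t
    simpa [hL] using ((hasDerivAt_id t).smul_const e).const_add x
  have hLc : Continuous L := by continuity
  have hL0 : L 0 = x := by simp [hL]
  have hLt : Tendsto L (𝓝 0) (𝓝 x) := by
    rw [← hL0]; exact hLc.continuousAt
  have hdiff : ∀ y ∈ O, DifferentiableAt ℝ h y := fun y hy =>
    (hC.differentiableOn (by norm_num)).differentiableAt (hO.mem_nhds hy)
  set g : EuclideanSpace ℝ (Fin N) → ℝ := fun y => fderiv ℝ h y e with hg
  have hgC : ContDiffOn ℝ 1 (fun y => fderiv ℝ h y) O :=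
    hC.fderiv_of_isOpen hO (by norm_num)
  have hgdiff : DifferentiableAt ℝ g x := by
    have : DifferentiableOn ℝ (fun y => fderiv ℝ h y) O := hgC.differentiableOn (by norm_num)
    have hd : DifferentiableAt ℝ (fun y => fderiv ℝ h y) x :=
      this.differentiableAt (hO.mem_nhds hx)
    exact (ContinuousLinearMap.apply ℝ ℝ e).differentiableAt.comp x hd
  have hevO : ∀ᶠ t in 𝓝 (0:ℝ), L t ∈ O := hLt.eventually (hO.eventually_mem hx)
  have hev : ∀ᶠ t in 𝓝 (0:ℝ), HasDerivAt (fun s => h (L s)) (g (L t)) t := by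
    filter_upwards [hevO] with t ht
    exact ((hdiff _ ht).hasFDerivAt.comp_hasDerivAt t (hLd t))
  have hgd : HasDerivAt (fun t => g (L t)) (fderiv ℝ g x e) 0 := by
    have hgd' : HasFDerivAt g (fderiv ℝ g x) (L 0) := by rw [hL0]; exact hgdiff.hasFDerivAt
    exact hgd'.comp_hasDerivAt 0 (hLd 0)
  have hmaxφ : IsLocalMax (fun t => h (L t)) 0 := by
    have := hLt.eventually hmax
    simpa [IsLocalMax, IsMaxFilter, hL0] using this
  exact second_deriv_nonpos_at_localmax hev hgd hmaxφ

/-- First derivative of `u ^ β` on an open set where `u > 0`. -/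
lemma fderiv_rpow {u : EuclideanSpace ℝ (Fin N) → ℝ} {O : Set (EuclideanSpace ℝ (Fin N))}
    (hO : IsOpen O) (hC : ContDiffOn ℝ 2 u O) (hpos : ∀ y ∈ O, 0 < u y)
    {y : EuclideanSpace ℝ (Fin N)} (hy : y ∈ O) (β : ℝ) :
    fderiv ℝ (fun z => u z ^ β) y = (β * u y ^ (β - 1)) • fderiv ℝ u y := by
  have hud : DifferentiableAt ℝ u y :=
    (hC.differentiableOn (by norm_num)).differentiableAt (hO.mem_nhds hy)
  have hr : HasDerivAt (fun t : ℝ => t ^ β) (β * u y ^ (β - 1)) (u y) :=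
    Real.hasDerivAt_rpow_const (Or.inl (ne_of_gt (hpos y hy)))
  exact (hr.comp_hasFDerivAt y hud.hasFDerivAt).fderiv

/-- Laplacian of `u ^ β` on an open set where `u > 0`. -/
lemma lap_rpow {u : EuclideanSpace ℝ (Fin N) → ℝ} {O : Set (EuclideanSpace ℝ (Fin N))}
    (hO : IsOpen O) (hC : ContDiffOn ℝ 2 u O) (hpos : ∀ y ∈ O, 0 < u y)
    {x : EuclideanSpace ℝ (Fin N)} (hx : x ∈ O) (β : ℝ) :
    lap (fun z => u z ^ β) x =
      β * u x ^ (β - 1) * lap u x +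
      β * (β - 1) * u x ^ (β - 2) *
        ∑ i : Fin N, (fderiv ℝ u x (EuclideanSpace.single i 1))^2 := by
  have hud : ∀ y ∈ O, DifferentiableAt ℝ u y := fun y hy =>
    (hC.differentiableOn (by norm_num)).differentiableAt (hO.mem_nhds hy)
  have hDC : ContDiffOn ℝ 1 (fun y => fderiv ℝ u y) O := hC.fderiv_of_isOpen hO (by norm_num)
  have hA' : HasFDerivAt (fun y => u y ^ (β - 1))
      (((β-1) * u x ^ (β - 2)) • fderiv ℝ u x) x := by
    have hr : HasDerivAt (fun t : ℝ => t ^ (β-1)) ((β-1) * u x ^ (β - 2)) (u x) := by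
      have := Real.hasDerivAt_rpow_const (x := u x) (p := β - 1)
        (Or.inl (ne_of_gt (hpos x hx)))
      convert this using 2
      ring
    exact hr.comp_hasFDerivAt x (hud x hx).hasFDerivAt
  unfold lap
  rw [Finset.mul_sum, Finset.mul_sum, ← Finset.sum_add_distrib]
  apply Finset.sum_congr rfl
  intro i _
  set e : EuclideanSpace ℝ (Fin N) := EuclideanSpace.single i 1 with he
  have hevq : (fun y => fderiv ℝ (fun z => u z ^ β) y e)
      =ᶠ[𝓝 x] fun y => β * (u y ^ (β - 1) * fderiv ℝ u y e) := by
    filter_upwards [hO.mem_nhds hx] with y hy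
    rw [fderiv_rpow hO hC hpos hy β]
    simp [mul_assoc]
  have hBi : DifferentiableAt ℝ (fun y => fderiv ℝ u y e) x := by
    have hd : DifferentiableAt ℝ (fun y => fderiv ℝ u y) x :=
      (hDC.differentiableOn (by norm_num)).differentiableAt (hO.mem_nhds hx)
    exact (ContinuousLinearMap.apply ℝ ℝ e).differentiableAt.comp x hd
  have hprod : HasFDerivAt (fun y => u y ^ (β - 1) * fderiv ℝ u y e)
      (u x ^ (β - 1) • (fderiv ℝ (fun y => fderiv ℝ u y e) x) +
       (((β-1) * u x ^ (β - 2)) • fderiv ℝ u x).smulRight (fderiv ℝ u x e)) x :=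
    hA'.mul' hBi.hasFDerivAt
  have : fderiv ℝ (fun y => fderiv ℝ (fun z => u z ^ β) y e) x e
      = β * (u x ^ (β - 1) * (fderiv ℝ (fun y => fderiv ℝ u y e) x e) +
        (fderiv ℝ u x e) * ((β-1) * u x ^ (β - 2) * fderiv ℝ u x e)) := by
    rw [hevq.fderiv_eq]
    rw [fderiv_const_mul (hprod.differentiableAt)]
    rw [hprod.fderiv]
    simp [mul_assoc]
    ring
  rw [this]
  ring

set_option maxHeartbeats 2000000 in
/-- The key comparison: for any two extended Lane–Emden solutions,
`u₂ ^ (2-q) ≤ u₁ ^ (2-q)` pointwise. -/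
lemma laneEmden_key {N : ℕ} {q : ℝ} (hq1 : 1 ≤ q) (hq2 : q < 2)
    {Ω : Set (EuclideanSpace ℝ (Fin N))} (hΩo : IsOpen Ω) (hΩb : Bornology.IsBounded Ω)
    {u₁ u₂ : EuclideanSpace ℝ (Fin N) → ℝ}
    (h₁ : IsExtLaneEmdenSolution q Ω u₁) (h₂ : IsExtLaneEmdenSolution q Ω u₂) :
    ∀ x, u₂ x ^ (2 - q) ≤ u₁ x ^ (2 - q) := by
  obtain ⟨⟨K₁, hlip₁⟩, hzero₁, hpos₁, hC₁, hpde₁⟩ := h₁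
  obtain ⟨⟨K₂, hlip₂⟩, hzero₂, hpos₂, hC₂, hpde₂⟩ := h₂
  set β : ℝ := 2 - q with hβ
  have hβpos : 0 < β := by simp [hβ]; linarith
  have hβ1 : β ≤ 1 := by simp [hβ]; linarith
  set v₁ : EuclideanSpace ℝ (Fin N) → ℝ := fun z => u₁ z ^ β with hv₁
  set v₂ : EuclideanSpace ℝ (Fin N) → ℝ := fun z => u₂ z ^ β with hv₂
  intro x
  apply le_of_forall_pos_le_add
  intro δ hδ
  by_contra hcon
  push_neg at hcon
  have hxb : ∃ xb, v₁ xb + δ < v₂ xb := ⟨x, hcon⟩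
  clear hcon x
  obtain ⟨xb, hxb⟩ := hxb
  -- basic positivity/continuity facts
  have hn₁ : ∀ z, 0 ≤ u₁ z := by
    intro z
    by_cases hz : z ∈ Ω
    · exact (hpos₁ z hz).le
    · rw [hzero₁ z hz]
  have hn₂ : ∀ z, 0 ≤ u₂ z := by
    intro z
    by_cases hz : z ∈ Ω
    · exact (hpos₂ z hz).le
    · rw [hzero₂ z hz]
  have hv₂cont : Continuous v₂ :=
    hlip₂.continuous.rpow_const (fun z => Or.inr hβpos.le)
  have hv₁nonneg : ∀ z, 0 ≤ v₁ z := fun z => Real.rpow_nonneg (hn₁ z) β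
  -- the compact set K
  set K : Set (EuclideanSpace ℝ (Fin N)) := {z | δ ≤ v₂ z} with hK
  have hKΩ : K ⊆ Ω := by
    intro z hz
    by_contra hzo
    have : v₂ z = 0 := by
      simp only [hv₂]
      rw [hzero₂ z hzo, Real.zero_rpow (ne_of_gt hβpos)]
    rw [Set.mem_setOf_eq, this] at hz
    linarith
  have hKc : IsCompact K := by
    apply Metric.isCompact_of_isClosed_isBounded
    · exact isClosed_le continuous_const hv₂cont
    · exact hΩb.subset hKΩ
  have hxbK : xb ∈ K := by
    rw [hK, Set.mem_setOf_eq]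
    have := hv₁nonneg xb
    linarith
  -- maximize the ratio
  have hv₁posK : ∀ z ∈ K, 0 < v₁ z := fun z hz =>
    Real.rpow_pos_of_pos (hpos₁ z (hKΩ hz)) β
  have hφcont : ContinuousOn (fun z => (v₂ z - δ) / v₁ z) K := by
    apply ContinuousOn.div
    · exact (hv₂cont.sub continuous_const).continuousOn
    · exact (hlip₁.continuous.rpow_const (fun z => Or.inr hβpos.le)).continuousOn
    · exact fun z hz => ne_of_gt (hv₁posK z hz)
  obtain ⟨x₀, hx₀K, hx₀max⟩ := hKc.exists_isMaxOn ⟨xb, hxbK⟩ hφcont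
  set m : ℝ := (v₂ x₀ - δ) / v₁ x₀ with hm
  have hx₀Ω : x₀ ∈ Ω := hKΩ hx₀K
  have hv₁x₀ : 0 < v₁ x₀ := hv₁posK x₀ hx₀K
  have hm1 : 1 < m := by
    have h1 : (v₂ xb - δ) / v₁ xb ≤ m := hx₀max hxbK
    have h2 : 1 < (v₂ xb - δ) / v₁ xb := by
      rw [lt_div_iff₀ (hv₁posK xb hxbK)]
      linarith
    linarith
  -- the global max function h
  set h : EuclideanSpace ℝ (Fin N) → ℝ := fun z => v₂ z - (δ + m * v₁ z) with hh
  have hglob : ∀ z, h z ≤ 0 := by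
    intro z
    by_cases hz : z ∈ K
    · have hle : (v₂ z - δ) / v₁ z ≤ m := hx₀max hz
      have hvz := hv₁posK z hz
      rw [div_le_iff₀ hvz] at hle
      simp only [hh]
      linarith
    · have : v₂ z < δ := by
        by_contra hc
        push_neg at hc
        exact hz hc
      have := hv₁nonneg z
      simp only [hh]
      nlinarith
  have hx₀eq : v₂ x₀ - δ = m * v₁ x₀ := by
    rw [hm, div_mul_cancel₀]
    exact ne_of_gt hv₁x₀
  have hx₀h : h x₀ = 0 := by simp only [hh]; linarith
  have hmax : IsLocalMax h x₀ := by
    apply Filter.Eventually.of_forall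
    intro z
    rw [hx₀h]
    exact hglob z
  -- C² regularity of v₁, v₂ on Ω
  have hvC : ∀ (u : EuclideanSpace ℝ (Fin N) → ℝ), ContDiffOn ℝ 2 u Ω →
      (∀ z ∈ Ω, 0 < u z) → ContDiffOn ℝ 2 (fun z => u z ^ β) Ω := by
    intro u hC hpos z hz
    exact ((hC.contDiffAt (hΩo.mem_nhds hz)).rpow_const_of_ne
      (ne_of_gt (hpos z hz))).contDiffWithinAt
  have hv₁C : ContDiffOn ℝ 2 v₁ Ω := hvC u₁ hC₁ hpos₁
  have hv₂C : ContDiffOn ℝ 2 v₂ Ω := hvC u₂ hC₂ hpos₂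
  have hhC : ContDiffOn ℝ 2 h Ω := by
    apply hv₂C.sub
    exact contDiffOn_const.add (contDiffOn_const.mul hv₁C)
  -- differentiability at points of Ω
  have hvdiff : ∀ (v : EuclideanSpace ℝ (Fin N) → ℝ), ContDiffOn ℝ 2 v Ω →
      ∀ z ∈ Ω, DifferentiableAt ℝ v z := fun v hC z hz =>
    (hC.differentiableOn (by norm_num)).differentiableAt (hΩo.mem_nhds hz)
  -- first-order condition: fderiv v₂ x₀ = m • fderiv v₁ x₀
  have hfd : ∀ z ∈ Ω, fderiv ℝ h z = fderiv ℝ v₂ z - m • fderiv ℝ v₁ z := by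
    intro z hz
    have h2 : HasFDerivAt (fun y => δ + m * v₁ y) (m • fderiv ℝ v₁ z) z :=
      ((hvdiff v₁ hv₁C z hz).hasFDerivAt.const_mul m).const_add δ
    exact ((hvdiff v₂ hv₂C z hz).hasFDerivAt.sub h2).fderiv
  have hgrad : fderiv ℝ v₂ x₀ = m • fderiv ℝ v₁ x₀ := by
    have h0 := hmax.fderiv_eq_zero
    rw [hfd x₀ hx₀Ω] at h0
    have := sub_eq_zero.mp h0
    exact this
  -- second-order condition, summed: lap v₂ x₀ ≤ m * lap v₁ x₀
  have hsecond : lap v₂ x₀ - m * lap v₁ x₀ ≤ 0 := by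
    have hterm : ∀ i : Fin N,
        fderiv ℝ (fun y => fderiv ℝ v₂ y (EuclideanSpace.single i 1)) x₀
            (EuclideanSpace.single i 1)
          - m * fderiv ℝ (fun y => fderiv ℝ v₁ y (EuclideanSpace.single i 1)) x₀
            (EuclideanSpace.single i 1) ≤ 0 := by
      intro i
      set e : EuclideanSpace ℝ (Fin N) := EuclideanSpace.single i 1 with he
      have hdir := dir_second_deriv_nonpos e hΩo hx₀Ω hhC hmax
      -- rewrite the directional second derivative of h
      have hev : (fun y => fderiv ℝ h y e)
          =ᶠ[𝓝 x₀] (fun y => fderiv ℝ v₂ y e - m * fderiv ℝ v₁ y e) := by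
        filter_upwards [hΩo.mem_nhds hx₀Ω] with y hy
        rw [hfd y hy]
        simp
      have hBdiff : ∀ (v : EuclideanSpace ℝ (Fin N) → ℝ), ContDiffOn ℝ 2 v Ω →
          DifferentiableAt ℝ (fun y => fderiv ℝ v y e) x₀ := by
        intro v hC
        have hDC : ContDiffOn ℝ 1 (fun y => fderiv ℝ v y) Ω :=
          hC.fderiv_of_isOpen hΩo (by norm_num)
        have hd : DifferentiableAt ℝ (fun y => fderiv ℝ v y) x₀ :=
          (hDC.differentiableOn (by norm_num)).differentiableAt (hΩo.mem_nhds hx₀Ω)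
        exact (ContinuousLinearMap.apply ℝ ℝ e).differentiableAt.comp x₀ hd
      have heq : fderiv ℝ (fun y => fderiv ℝ h y e) x₀ e
          = fderiv ℝ (fun y => fderiv ℝ v₂ y e) x₀ e
            - m * fderiv ℝ (fun y => fderiv ℝ v₁ y e) x₀ e := by
        rw [hev.fderiv_eq]
        rw [fderiv_fun_sub (hBdiff v₂ hv₂C) ((hBdiff v₁ hv₁C).const_mul m)]
        rw [fderiv_const_mul (hBdiff v₁ hv₁C) m]
        simp
      rw [heq] at hdir
      exact hdir
    have : lap v₂ x₀ - m * lap v₁ x₀ =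
        ∑ i : Fin N,
          (fderiv ℝ (fun y => fderiv ℝ v₂ y (EuclideanSpace.single i 1)) x₀
              (EuclideanSpace.single i 1)
            - m * fderiv ℝ (fun y => fderiv ℝ v₁ y (EuclideanSpace.single i 1)) x₀
              (EuclideanSpace.single i 1)) := by
      unfold lap
      rw [Finset.sum_sub_distrib, Finset.mul_sum]
    rw [this]
    exact Finset.sum_nonpos fun i _ => hterm i
  -- Laplacian formulas
  set P : ℝ := u₁ x₀ with hP
  set Q : ℝ := u₂ x₀ with hQ
  have hPpos : 0 < P := hpos₁ x₀ hx₀Ω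
  have hQpos : 0 < Q := hpos₂ x₀ hx₀Ω
  set S₁ : ℝ := ∑ i : Fin N, (fderiv ℝ u₁ x₀ (EuclideanSpace.single i 1))^2 with hS₁
  set S₂ : ℝ := ∑ i : Fin N, (fderiv ℝ u₂ x₀ (EuclideanSpace.single i 1))^2 with hS₂
  have hS₁n : 0 ≤ S₁ := Finset.sum_nonneg fun i _ => sq_nonneg _
  have hS₂n : 0 ≤ S₂ := Finset.sum_nonneg fun i _ => sq_nonneg _
  have hlap₁ : lap v₁ x₀ = -β + β * (β-1) * P ^ (β-2) * S₁ := by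
    rw [hv₁]
    rw [lap_rpow hΩo hC₁ hpos₁ hx₀Ω β]
    have hpde : lap u₁ x₀ = -(P ^ (q-1)) := by
      have := hpde₁ x₀ hx₀Ω
      linarith
    rw [hpde]
    have e1 : P ^ (β - 1) * P ^ (q - 1) = 1 := by
      rw [← Real.rpow_add hPpos]
      have : β - 1 + (q - 1) = 0 := by rw [hβ]; ring
      rw [this, Real.rpow_zero]
    linear_combination (-β) * e1
  have hlap₂ : lap v₂ x₀ = -β + β * (β-1) * Q ^ (β-2) * S₂ := by
    rw [hv₂]
    rw [lap_rpow hΩo hC₂ hpos₂ hx₀Ω β]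
    have hpde : lap u₂ x₀ = -(Q ^ (q-1)) := by
      have := hpde₂ x₀ hx₀Ω
      linarith
    rw [hpde]
    have e1 : Q ^ (β - 1) * Q ^ (q - 1) = 1 := by
      rw [← Real.rpow_add hQpos]
      have : β - 1 + (q - 1) = 0 := by rw [hβ]; ring
      rw [this, Real.rpow_zero]
    linear_combination (-β) * e1
  -- gradient relation in terms of u₁, u₂
  have hgradi : ∀ i : Fin N,
      Q ^ (β-1) * fderiv ℝ u₂ x₀ (EuclideanSpace.single i 1)
        = m * (P ^ (β-1) * fderiv ℝ u₁ x₀ (EuclideanSpace.single i 1)) := by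
    intro i
    have h2 := congrFun (congrArg DFunLike.coe hgrad) (EuclideanSpace.single i 1)
    rw [hv₁, hv₂] at h2
    rw [fderiv_rpow hΩo hC₂ hpos₂ hx₀Ω β, fderiv_rpow hΩo hC₁ hpos₁ hx₀Ω β] at h2
    simp only [ContinuousLinearMap.coe_smul', Pi.smul_apply, smul_eq_mul] at h2
    have hβne : β ≠ 0 := ne_of_gt hβpos
    apply mul_left_cancel₀ hβne
    linear_combination h2
  -- sum of squares relation
  have hSrel : (Q ^ (β-1))^2 * S₂ = m^2 * (P ^ (β-1))^2 * S₁ := by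
    rw [hS₁, hS₂, Finset.mul_sum, Finset.mul_sum]
    apply Finset.sum_congr rfl
    intro i _
    linear_combination (Q ^ (β-1) * fderiv ℝ u₂ x₀ (EuclideanSpace.single i 1)
      + m * (P ^ (β-1) * fderiv ℝ u₁ x₀ (EuclideanSpace.single i 1))) * hgradi i
  -- rpow algebra
  have e2 : (P ^ (β-1))^2 = P ^ β * P ^ (β-2) := by
    rw [← Real.rpow_add hPpos, ← Real.rpow_natCast (P ^ (β-1)) 2, ← Real.rpow_mul hPpos.le]
    norm_num
    ring_nf
  have e3 : (Q ^ (β-1))^2 = Q ^ β * Q ^ (β-2) := by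
    rw [← Real.rpow_add hQpos, ← Real.rpow_natCast (Q ^ (β-1)) 2, ← Real.rpow_mul hQpos.le]
    norm_num
    ring_nf
  set T : ℝ := P ^ β with hT
  set R : ℝ := Q ^ β with hR
  set B₁ : ℝ := P ^ (β-2) with hB₁
  set B₂ : ℝ := Q ^ (β-2) with hB₂
  have hTpos : 0 < T := Real.rpow_pos_of_pos hPpos β
  have hRpos : 0 < R := Real.rpow_pos_of_pos hQpos β
  have hB₁pos : 0 < B₁ := Real.rpow_pos_of_pos hPpos _
  have hB₂pos : 0 < B₂ := Real.rpow_pos_of_pos hQpos _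
  have hRT : R = δ + m * T := by
    have : v₂ x₀ = Q ^ β := rfl
    have h2 : v₁ x₀ = P ^ β := rfl
    rw [hR, hT, ← this, ← h2]
    linarith [hx₀eq]
  have hSrel' : R * B₂ * S₂ = m^2 * (T * B₁) * S₁ := by
    rw [← e3, ← e2] at *
    linarith [hSrel]
  -- final contradiction
  have hineq : -β + β * (β-1) * B₂ * S₂ ≤ m * (-β + β * (β-1) * B₁ * S₁) := by
    rw [← hlap₁, ← hlap₂]
    linarith [hsecond]
  clear_value β m S₁ S₂ T R B₁ B₂ P Q
  have h6 : R * (m * (B₁ * S₁) - B₂ * S₂) = m * (B₁ * S₁) * δ := by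
    linear_combination (-1 : ℝ) * hSrel' + (m * (B₁ * S₁)) * hRT
  have h7 : 0 ≤ m * (B₁ * S₁) - B₂ * S₂ := by
    have hnum : 0 ≤ m * (B₁ * S₁) * δ := by positivity
    nlinarith [h6, hRpos]
  have h8 : β * (β - 1) * (m * (B₁ * S₁) - B₂ * S₂) ≤ 0 := by
    have : β * (β - 1) ≤ 0 := by nlinarith
    exact mul_nonpos_of_nonpos_of_nonneg this h7
  nlinarith [hineq, h8, hβpos, hm1]

end Aux

/-- **Uniqueness for the Lane–Emden equation** on a bounded open set. -/
theorem lane_emden_uniqueness {N : ℕ} (hN : 1 ≤ N) {q : ℝ} (hq1 : 1 ≤ q) (hq2 : q < 2)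
    {Ω : Set (EuclideanSpace ℝ (Fin N))} (hΩo : IsOpen Ω) (hΩb : Bornology.IsBounded Ω)
    {u₁ u₂ : EuclideanSpace ℝ (Fin N) → ℝ}
    (h₁ : IsExtLaneEmdenSolution q Ω u₁) (h₂ : IsExtLaneEmdenSolution q Ω u₂) :
    u₁ = u₂ := by
  have key₁ := laneEmden_key hq1 hq2 hΩo hΩb h₁ h₂
  have key₂ := laneEmden_key hq1 hq2 hΩo hΩb h₂ h₁
  have hβpos : (0:ℝ) < 2 - q := by linarith
  have hn : ∀ (u : EuclideanSpace ℝ (Fin N) → ℝ), IsExtLaneEmdenSolution q Ω u →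
      ∀ z, 0 ≤ u z := by
    intro u hu z
    by_cases hz : z ∈ Ω
    · exact (hu.2.2.1 z hz).le
    · rw [hu.2.1 z hz]
  funext z
  rcases lt_trichotomy (u₁ z) (u₂ z) with hlt | heq | hgt
  · exfalso
    have := Real.rpow_lt_rpow (hn u₁ h₁ z) hlt hβpos
    linarith [key₁ z]
  · exact heq
  · exfalso
    have := Real.rpow_lt_rpow (hn u₂ h₂ z) hgt hβpos
    linarith [key₂ z]
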